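/- For every n ≥ 1, Σ_{F ∈ PF(n)} ∏_{v ∈ F} B_{h_v} = (-1)^n / (n+1)!, where B_m denotes the m-th Bernoulli number (with B_1 = −1/2) and PF(n) is the set of plane forests with n vertices. -/

import Mathlib

/-- Plane trees: nonempty rooted trees whose subtrees at each vertex are linearly ordered. -/
inductive PTree : Type
  | node : List PTree → PTree

namespace PTree

mutual
/-- The number of vertices of a plane tree. -/
def size : PTree → ℕ
  | .node cs => sizeList cs + 1
/-- The total number of vertices of a plane forest (a list of plane trees). -/
def sizeList : List PTree → ℕ
  | [] => 0
  | t :: ts => size t + sizeList ts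
end

mutual
/-- The multiset of hook lengths of a plane tree: the hook length of a vertex
is the number of its descendants, counting the vertex itself. -/
def hooks : PTree → Multiset ℕ+
  | .node cs => ⟨sizeList cs + 1, Nat.succ_pos _⟩ ::ₘ hooksList cs
/-- The multiset of hook lengths of a plane forest. -/
def hooksList : List PTree → Multiset ℕ+
  | [] => 0
  | t :: ts => hooks t + hooksList ts
end

end PTree

open PTree Finset

noncomputable section BHF

/-- The Bernoulli weight of a forest. -/
def bw (l : List PTree) : ℚ := ((PTree.hooksList l).map fun h => bernoulli (h : ℕ)).prod

lemma bw_nil : bw [] = 1 := by simp [bw, PTree.hooksList]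

lemma bw_cons (cs ts : List PTree) :
    bw (.node cs :: ts) = bernoulli (sizeList cs + 1) * (bw cs * bw ts) := by
  have e : hooks (.node cs) = Nat.succPNat (sizeList cs) ::ₘ hooksList cs := rfl
  unfold bw
  rw [hooksList, e]
  simp [mul_assoc]

lemma sizeList_eq_zero {l : List PTree} (h : sizeList l = 0) : l = [] := by
  match l with
  | [] => rfl
  | .node cs :: ts => simp [sizeList, size] at h

lemma finite_le (n : ℕ) : {l : List PTree | sizeList l ≤ n}.Finite := by
  induction n with
  | zero =>
    apply Set.Finite.subset (Set.finite_singleton ([] : List PTree))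
    intro l hl
    simp only [Set.mem_setOf_eq, Nat.le_zero] at hl
    simp [sizeList_eq_zero hl]
  | succ n ih =>
    apply Set.Finite.subset (Set.Finite.insert []
      (((ih.prod ih).image (fun p : List PTree × List PTree => PTree.node p.1 :: p.2))))
    intro l hl
    match l with
    | [] => simp
    | .node cs :: ts =>
      simp only [Set.mem_setOf_eq, sizeList, size] at hl
      right
      exact ⟨(cs, ts), ⟨by simp [Set.mem_setOf_eq]; omega, by simp [Set.mem_setOf_eq]; omega⟩, rfl⟩

lemma finite_eq (n : ℕ) : {l : List PTree | sizeList l = n}.Finite :=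
  (finite_le n).subset fun l hl => le_of_eq hl

/-- The finset of forests with `n` vertices. -/
def Fs (n : ℕ) : Finset (List PTree) := (finite_eq n).toFinset

lemma mem_Fs {n : ℕ} {l : List PTree} : l ∈ Fs n ↔ sizeList l = n := by
  simp [Fs, Set.Finite.mem_toFinset]

/-- Total Bernoulli weight of forests of size `n`. -/
def W (n : ℕ) : ℚ := ∑ l ∈ Fs n, bw l

lemma W_zero : W 0 = 1 := by
  have : Fs 0 = {[]} := by
    ext l
    simp only [mem_Fs, Finset.mem_singleton]
    constructor
    · exact sizeList_eq_zero
    · rintro rfl; rfl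
  simp [W, this, bw_nil]

lemma W_succ (n : ℕ) :
    W (n + 1) = ∑ k ∈ range (n + 1), bernoulli (k + 1) * (W k * W (n - k)) := by
  classical
  set g : (Σ _ : ℕ, List PTree × List PTree) → List PTree :=
    fun x => PTree.node x.2.1 :: x.2.2 with hg
  have himg : Fs (n + 1) = ((range (n + 1)).sigma (fun k => Fs k ×ˢ Fs (n - k))).image g := by
    ext l
    simp only [mem_Fs, Finset.mem_image, Finset.mem_sigma, Finset.mem_product, mem_range]
    constructor
    · intro hl
      match l with
      | [] => simp [sizeList] at hl
      | .node cs :: ts =>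
        simp only [sizeList, size] at hl
        refine ⟨⟨sizeList cs, cs, ts⟩, ⟨?_, ?_, ?_⟩, rfl⟩
        · show sizeList cs < n + 1; omega
        · show sizeList cs = sizeList cs; rfl
        · show sizeList ts = n - sizeList cs; omega
    · rintro ⟨⟨k, cs, ts⟩, ⟨hk, hcs, hts⟩, rfl⟩
      dsimp only at hk hcs hts
      show sizeList (PTree.node cs :: ts) = n + 1
      simp only [sizeList, size]
      omega
  have hinj : ∀ x ∈ (range (n + 1)).sigma (fun k => Fs k ×ˢ Fs (n - k)),
      ∀ y ∈ (range (n + 1)).sigma (fun k => Fs k ×ˢ Fs (n - k)), g x = g y → x = y := by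
    rintro ⟨k, cs, ts⟩ hx ⟨k', cs', ts'⟩ hy hxy
    simp only [hg, List.cons.injEq, PTree.node.injEq] at hxy
    obtain ⟨rfl, rfl⟩ := hxy
    simp only [Finset.mem_sigma, Finset.mem_product, mem_Fs] at hx hy
    have : k = k' := by omega
    subst this; rfl
  rw [W, himg, Finset.sum_image hinj, Finset.sum_sigma]
  refine Finset.sum_congr rfl fun k hk => ?_
  rw [Finset.sum_product, W, W, Finset.sum_mul_sum, Finset.mul_sum]
  refine Finset.sum_congr rfl fun cs hcs => ?_
  rw [Finset.mul_sum]
  refine Finset.sum_congr rfl fun ts hts => ?_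
  rw [mem_Fs] at hcs
  simp [hg, bw_cons, hcs, mul_assoc]

lemma W_eq (n : ℕ) : W n = (-1 : ℚ) ^ n / ((n + 1).factorial : ℚ) := by
  induction n using Nat.strong_induction_on with
  | _ n ih =>
    match n with
    | 0 => simpa using W_zero
    | n + 1 =>
      rw [W_succ]
      have key : ∀ k ∈ range (n + 1),
          bernoulli (k + 1) * (W k * W (n - k))
          = (-1 : ℚ) ^ n / ((n + 2).factorial : ℚ)
              * (((n + 2).choose (k + 1) : ℚ) * bernoulli (k + 1)) := by
        intro k hk
        rw [mem_range] at hk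
        have hk' : k ≤ n := by omega
        rw [ih k (by omega), ih (n - k) (by omega)]
        rw [Nat.cast_choose ℚ (by omega : k + 1 ≤ n + 2)]
        have h1 : n + 2 - (k + 1) = n - k + 1 := by omega
        have h2 : (-1 : ℚ) ^ k * (-1 : ℚ) ^ (n - k) = (-1 : ℚ) ^ n := by
          rw [← pow_add]; congr 1; omega
        have f1 : ((k + 1).factorial : ℚ) ≠ 0 := Nat.cast_ne_zero.2 (Nat.factorial_ne_zero _)
        have f2 : ((n - k + 1).factorial : ℚ) ≠ 0 := Nat.cast_ne_zero.2 (Nat.factorial_ne_zero _)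
        have f3 : ((n + 2).factorial : ℚ) ≠ 0 := Nat.cast_ne_zero.2 (Nat.factorial_ne_zero _)
        rw [h1]
        field_simp
        ring_nf
        rw [← h2]
        ring
      rw [Finset.sum_congr rfl key, ← Finset.mul_sum]
      have hsum : ∑ k ∈ range (n + 1), (((n + 2).choose (k + 1) : ℚ)) * bernoulli (k + 1)
          = -1 := by
        have h0 := sum_bernoulli (n + 2)
        rw [Finset.sum_range_succ' (fun i => (((n + 2).choose i : ℚ)) * bernoulli i) (n + 1)] at h0
        simp only [Nat.choose_zero_right, Nat.cast_one, bernoulli_zero, one_mul] at h0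
        have : (n + 2 = 1) = False := by simp
        rw [if_neg (by omega)] at h0
        linarith
      rw [hsum, show n + 1 + 1 = n + 2 from rfl, pow_succ]
      ring

lemma finsum_eq_W (n : ℕ) :
    (∑ᶠ F : {l : List PTree // PTree.sizeList l = n}, bw (F : List PTree)) = W n := by
  rw [W, Fs, ← finsum_mem_coe_finset, Set.Finite.coe_toFinset]
  exact finsum_set_coe_eq_finsum_mem {l : List PTree | PTree.sizeList l = n}

end BHF

/-- The Bernoulli number hook length formula for plane forests. -/
theorem bernoulli_hook_formula_plane_forests (n : ℕ) (hn : 1 ≤ n) :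
    ∑ᶠ F : {l : List PTree // PTree.sizeList l = n},
      (PTree.hooksList (F : List PTree) |>.map fun h => bernoulli (h : ℕ)).prod
    = (-1 : ℚ) ^ n / ((n + 1).factorial : ℚ) := by
  exact (finsum_eq_W n).trans (W_eq n)
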